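/- In the formal double zeta space D_k for even k \ge 4, the restricted sum formulas hold: \sum_{r odd, 1 \le r \le k-3} Z_{r, k-r} = (1/4) Z_k and \sum_{r even, 2 \le r \le k-2} Z_{r, k-r} = (3/4) Z_k. -/
import Mathlib

open Finset

private lemma refl_sum (k : ℕ) (g : ℕ → ℚ) :
    ∑ p ∈ Finset.Icc 1 (k-1), g (k - p) = ∑ p ∈ Finset.Icc 1 (k-1), g p := by
  refine Finset.sum_nbij' (fun p => k - p) (fun p => k - p) ?_ ?_ ?_ ?_ (fun a _ => rfl) <;>
    intro a ha <;> simp only [Finset.mem_Icc] at * <;> omega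

private lemma alt_q (n : ℕ) :
    ∑ m ∈ Finset.range (n+1), (-1:ℚ)^m * (n.choose m : ℚ) = if n = 0 then 1 else 0 := by
  have h := congrArg (fun z : ℤ => (z : ℚ)) (Int.alternating_sum_range_choose (n := n))
  push_cast at h
  simpa [apply_ite] using h

private lemma alt_choose_sum (k p : ℕ) (hp1 : 1 ≤ p) (hp2 : p ≤ k - 1) :
    ∑ r ∈ Finset.Icc 1 (k-1), (-1:ℚ)^r * ((p-1).choose (r-1) : ℚ)
      = if p = 1 then -1 else 0 := by
  have hk : 1 ≤ k - 1 := le_trans hp1 hp2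
  have h1 : Finset.Icc 1 (k-1) = Finset.Ico 1 ((k-1)+1) := by
    rw [Finset.Ico_add_one_right_eq_Icc]
  rw [h1, Finset.sum_Ico_eq_sum_range]
  have h2 : ∀ j ∈ Finset.range ((k-1)+1-1), (-1:ℚ)^(1+j) * ((p-1).choose ((1+j)-1) : ℚ)
      = -((-1:ℚ)^j * ((p-1).choose j : ℚ)) := by
    intro j _
    have : (1+j) - 1 = j := by omega
    rw [this, pow_add]
    ring
  rw [Finset.sum_congr rfl h2, Finset.sum_neg_distrib]
  have h3 : ∑ j ∈ Finset.range ((k-1)+1-1), (-1:ℚ)^j * ((p-1).choose j : ℚ)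
      = ∑ j ∈ Finset.range ((p-1)+1), (-1:ℚ)^j * ((p-1).choose j : ℚ) := by
    refine (Finset.sum_subset ?_ ?_).symm
    · intro x hx; simp only [Finset.mem_range] at *; omega
    · intro x hx hx2
      simp only [Finset.mem_range] at hx hx2
      rw [Nat.choose_eq_zero_of_lt (by omega)]
      simp
  rw [h3, alt_q]
  by_cases h : p = 1
  · simp [h]
  · rw [if_neg (by omega), if_neg h]; simp

private lemma neg_one_pow_sub (k r : ℕ) (hke : Even k) (hr : r ≤ k) :
    (-1:ℚ)^(k-r) = (-1)^r := by
  have h1 : (-1:ℚ)^(k-r) * (-1)^r = 1 := by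
    rw [← pow_add, Nat.sub_add_cancel hr]; exact hke.neg_one_pow
  have h2 : (-1:ℚ)^r * (-1)^r = 1 := by
    rw [← pow_add]
    have he : Even (r+r) := ⟨r, rfl⟩
    exact he.neg_one_pow
  calc (-1:ℚ)^(k-r) = (-1)^(k-r) * ((-1)^r * (-1)^r) := by rw [h2, mul_one]
    _ = ((-1)^(k-r) * (-1)^r) * (-1)^r := by ring
    _ = (-1)^r := by rw [h1, one_mul]

/-- The restricted sum formulas in the formal double zeta space `D_k` for even `k ≥ 4`:
in any realization `Z, Zk` of the double shuffle relations,
`∑_{r odd, 1≤r≤k-3} Z_{r,k-r} = (1/4) Z_k` and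
`∑_{r even, 2≤r≤k-2} Z_{r,k-r} = (3/4) Z_k`. -/
theorem restricted_sum_formulas (k : ℕ) (hk : 4 ≤ k) (hke : Even k)
    (Z : ℕ → ℕ → ℚ) (Zk : ℚ)
    (hrel : ∀ r s : ℕ, 1 ≤ r → 1 ≤ s → r + s = k →
      Z r s + Z s r + Zk =
        ∑ p ∈ Finset.Icc 1 (k - 1),
          ((Nat.choose (p - 1) (r - 1) + Nat.choose (p - 1) (s - 1) : ℕ) : ℚ) * Z (k - p) p) :
    (∑ r ∈ (Finset.Icc 1 (k - 3)).filter (fun r => Odd r), Z r (k - r)) = (1 / 4) * Zk ∧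
    (∑ r ∈ (Finset.Icc 2 (k - 2)).filter (fun r => Even r), Z r (k - r)) = (3 / 4) * Zk := by
  obtain ⟨m, hm⟩ := hke
  have hke : Even k := ⟨m, hm⟩
  -- Euler's sum formula
  have hB : ∑ r ∈ Icc 1 (k-2), Z r (k-r) = Zk := by
    have h := hrel 1 (k-1) (by omega) (by omega) (by omega)
    have e0 : k - 1 - 1 = k - 2 := by omega
    rw [e0] at h
    have hR : ∑ p ∈ Icc 1 (k-1), (((p-1).choose (1-1) + (p-1).choose (k-2) : ℕ) : ℚ) * Z (k-p) p
        = (∑ p ∈ Icc 1 (k-1), Z (k-p) p) + Z 1 (k-1) := by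
      have e1 : ∀ p ∈ Icc 1 (k-1), (((p-1).choose (1-1) + (p-1).choose (k-2) : ℕ) : ℚ) * Z (k-p) p
          = Z (k-p) p + (if p = k-1 then Z (k-p) p else 0) := by
        intro p hp
        simp only [mem_Icc] at hp
        by_cases hpk : p = k-1
        · rw [if_pos hpk, hpk]
          rw [show k - 1 - 1 = k - 2 by omega, Nat.choose_self, Nat.choose_zero_right]
          push_cast; ring
        · rw [if_neg hpk, Nat.choose_zero_right,
            Nat.choose_eq_zero_of_lt (show p - 1 < k - 2 by omega)]
          push_cast; ring
      rw [Finset.sum_congr rfl e1, Finset.sum_add_distrib, Finset.sum_ite_eq',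
        if_pos (by simp [mem_Icc]; omega)]
      rw [show k - (k-1) = 1 by omega]
    rw [hR] at h
    have hRefl : ∑ p ∈ Icc 1 (k-1), Z (k-p) p = ∑ r ∈ Icc 1 (k-1), Z r (k-r) := by
      rw [← refl_sum k (fun q => Z q (k-q))]
      refine Finset.sum_congr rfl fun p hp => ?_
      simp only [mem_Icc] at hp
      rw [show k - (k-p) = p by omega]
    rw [hRefl, show k - 1 = (k-2)+1 by omega,
      Finset.sum_Icc_succ_top (by omega) (fun r => Z r (k-r)),
      show k - ((k-2)+1) = 1 by omega, show (k-2)+1 = k-1 by omega] at h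
    linarith
  -- Alternating sum formula
  have hA : ∑ r ∈ Icc 1 (k-2), (-1:ℚ)^r * Z r (k-r) = Zk/2 := by
    have key : ∑ r ∈ Icc 1 (k-1), (-1:ℚ)^r * (Z r (k-r) + Z (k-r) r + Zk)
        = ∑ r ∈ Icc 1 (k-1), (-1:ℚ)^r *
            ∑ p ∈ Icc 1 (k-1), (((p-1).choose (r-1) + (p-1).choose (k-r-1) : ℕ) : ℚ) * Z (k-p) p := by
      refine Finset.sum_congr rfl fun r hr => ?_
      simp only [mem_Icc] at hr
      rw [hrel r (k-r) (by omega) (by omega) (by omega)]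
    -- LHS
    have hL : ∑ r ∈ Icc 1 (k-1), (-1:ℚ)^r * (Z r (k-r) + Z (k-r) r + Zk)
        = 2 * (∑ r ∈ Icc 1 (k-1), (-1:ℚ)^r * Z r (k-r)) - Zk := by
      have e1 : ∀ r ∈ Icc 1 (k-1), (-1:ℚ)^r * (Z r (k-r) + Z (k-r) r + Zk)
          = (-1:ℚ)^r * Z r (k-r) + (-1:ℚ)^r * Z (k-r) r + (-1:ℚ)^r * Zk := fun r _ => by ring
      rw [Finset.sum_congr rfl e1, Finset.sum_add_distrib, Finset.sum_add_distrib]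
      have e2 : ∑ r ∈ Icc 1 (k-1), (-1:ℚ)^r * Z (k-r) r
          = ∑ r ∈ Icc 1 (k-1), (-1:ℚ)^r * Z r (k-r) := by
        rw [← refl_sum k (fun q => (-1:ℚ)^q * Z q (k-q))]
        refine Finset.sum_congr rfl fun r hr => ?_
        simp only [mem_Icc] at hr
        rw [show k - (k-r) = r by omega, neg_one_pow_sub k r hke (by omega)]
      have e3 : ∑ r ∈ Icc 1 (k-1), (-1:ℚ)^r * Zk = -Zk := by
        rw [← Finset.sum_mul]
        have e4 : ∑ r ∈ Icc 1 (k-1), (-1:ℚ)^r = -1 := by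
          rw [show Icc 1 (k-1) = Ico 1 k from by rw [← Finset.Ico_add_one_right_eq_Icc]; congr 1; omega,
            Finset.sum_Ico_eq_sub _ (by omega), neg_one_geom_sum, if_pos hke]
          simp
        rw [e4]; ring
      rw [e2, e3]; ring
    -- RHS
    have hR : ∑ r ∈ Icc 1 (k-1), (-1:ℚ)^r *
          ∑ p ∈ Icc 1 (k-1), (((p-1).choose (r-1) + (p-1).choose (k-r-1) : ℕ) : ℚ) * Z (k-p) p
        = -2 * Z (k-1) 1 := by
      have e1 : ∀ r ∈ Icc 1 (k-1), (-1:ℚ)^r *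
            ∑ p ∈ Icc 1 (k-1), (((p-1).choose (r-1) + (p-1).choose (k-r-1) : ℕ) : ℚ) * Z (k-p) p
          = ∑ p ∈ Icc 1 (k-1), (-1:ℚ)^r *
              ((((p-1).choose (r-1) + (p-1).choose (k-r-1) : ℕ) : ℚ) * Z (k-p) p) :=
        fun r _ => Finset.mul_sum _ _ _
      rw [Finset.sum_congr rfl e1, Finset.sum_comm]
      have e2 : ∀ p ∈ Icc 1 (k-1), ∑ r ∈ Icc 1 (k-1), (-1:ℚ)^r *
            ((((p-1).choose (r-1) + (p-1).choose (k-r-1) : ℕ) : ℚ) * Z (k-p) p)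
          = if p = 1 then (-2:ℚ) * Z (k-p) p else 0 := by
        intro p hp
        simp only [mem_Icc] at hp
        have e3 : ∀ r ∈ Icc 1 (k-1), (-1:ℚ)^r *
              ((((p-1).choose (r-1) + (p-1).choose (k-r-1) : ℕ) : ℚ) * Z (k-p) p)
            = ((-1:ℚ)^r * ((p-1).choose (r-1) : ℚ)
                + (-1:ℚ)^r * ((p-1).choose (k-r-1) : ℚ)) * Z (k-p) p := by
          intro r _
          push_cast
          ring
        rw [Finset.sum_congr rfl e3, ← Finset.sum_mul, Finset.sum_add_distrib]
        have hS2 : ∑ r ∈ Icc 1 (k-1), (-1:ℚ)^r * ((p-1).choose (k-r-1) : ℚ)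
            = ∑ r ∈ Icc 1 (k-1), (-1:ℚ)^r * ((p-1).choose (r-1) : ℚ) := by
          rw [← refl_sum k (fun q => (-1:ℚ)^q * ((p-1).choose (q-1) : ℚ))]
          refine Finset.sum_congr rfl fun r hr => ?_
          simp only [mem_Icc] at hr
          rw [neg_one_pow_sub k r hke (by omega)]
        rw [hS2, alt_choose_sum k p hp.1 hp.2]
        by_cases hp1 : p = 1
        · rw [if_pos hp1, if_pos hp1]; ring
        · rw [if_neg hp1, if_neg hp1]; ring
      rw [Finset.sum_congr rfl e2]
      have e5 : ∀ p ∈ Icc 1 (k-1), (if p = 1 then (-2:ℚ) * Z (k-p) p else 0)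
          = (if p = 1 then (fun q => (-2:ℚ) * Z (k-q) q) p else 0) := fun p _ => rfl
      rw [Finset.sum_congr rfl e5, Finset.sum_ite_eq', if_pos (by simp [mem_Icc]; omega)]
    rw [hL, hR] at key
    rw [show k - 1 = (k-2)+1 by omega, Finset.sum_Icc_succ_top (by omega)] at key
    have hodd : Odd ((k-2)+1) := by
      rw [show (k-2)+1 = k-1 by omega]
      exact Nat.Even.sub_odd (by omega) hke odd_one
    rw [hodd.neg_one_pow, show k - ((k-2)+1) = 1 by omega,
      show (k-2)+1 = k-1 by omega] at key
    linarith
  -- split into odd and even parts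
  have hset1 : (Icc 1 (k-2)).filter (fun r => Odd r) = (Icc 1 (k-3)).filter (fun r => Odd r) := by
    ext r
    simp only [mem_filter, mem_Icc, Nat.odd_iff]
    omega
  have hset2 : (Icc 1 (k-2)).filter (fun r => ¬ Odd r) = (Icc 2 (k-2)).filter (fun r => Even r) := by
    ext r
    simp only [mem_filter, mem_Icc, Nat.not_odd_iff_even, Nat.even_iff]
    omega
  have hsplit1 := Finset.sum_filter_add_sum_filter_not (Icc 1 (k-2)) (fun r => Odd r)
    (fun r => Z r (k-r))
  have hsplit2 := Finset.sum_filter_add_sum_filter_not (Icc 1 (k-2)) (fun r => Odd r)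
    (fun r => (-1:ℚ)^r * Z r (k-r))
  rw [hset1, hset2, hB] at hsplit1
  have hodd' : ∑ r ∈ (Icc 1 (k-2)).filter (fun r => Odd r), (-1:ℚ)^r * Z r (k-r)
      = -∑ r ∈ (Icc 1 (k-3)).filter (fun r => Odd r), Z r (k-r) := by
    rw [hset1, ← Finset.sum_neg_distrib]
    refine Finset.sum_congr rfl fun r hr => ?_
    simp only [mem_filter] at hr
    rw [hr.2.neg_one_pow]; ring
  have heven' : ∑ r ∈ (Icc 1 (k-2)).filter (fun r => ¬ Odd r), (-1:ℚ)^r * Z r (k-r)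
      = ∑ r ∈ (Icc 2 (k-2)).filter (fun r => Even r), Z r (k-r) := by
    rw [hset2]
    refine Finset.sum_congr rfl fun r hr => ?_
    simp only [mem_filter] at hr
    rw [hr.2.neg_one_pow]; ring
  rw [hodd', heven', hA] at hsplit2
  constructor <;> linarith
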